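/- arXiv:1603.05015 — 5 statements merged into one kernel-verified Lean document; each statement's English description precedes it below -/
import Mathlib

section
/- Let n be a positive integer, let ρ > 0 and τ > 0 be real numbers, and let A be a real symmetric positive semidefinite n×n matrix with eigenvalues σ₁, …, σₙ ≥ 0. Then the infimum over all real n×n matrices L of the quantity (ρ/2)·‖A − LᵀL‖_F² + τ·‖L‖_* equals the sum over i = 1, …, n of min_{γ ≥ 0} [ (ρ/2)·(σᵢ − γ²)² + τ·γ ], and this infimum is attained. -/
open Matrix BigOperators Finset

noncomputable def frobNormSq {m n : ℕ} (M : Matrix (Fin m) (Fin n) ℝ) : ℝ :=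
  ∑ i, ∑ j, (M i j)^2

noncomputable def singularValues {m n : ℕ} (M : Matrix (Fin m) (Fin n) ℝ) : Fin n → ℝ :=
  fun i => Real.sqrt ((Matrix.isHermitian_conjTranspose_mul_self M).eigenvalues i)

noncomputable def nuclearNorm {m n : ℕ} (M : Matrix (Fin m) (Fin n) ℝ) : ℝ :=
  ∑ i, singularValues M i

section Helpers
open Polynomial


lemma myConjT {k l : Type*} (M : Matrix k l ℝ) : Mᴴ = Mᵀ := by
  ext i j; simp [Matrix.conjTranspose_apply]

lemma myCharpolySimilar {m : Type*} [Fintype m] [DecidableEq m]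
    (P M Q : Matrix m m ℝ) (h1 : P * Q = 1) (h2 : Q * P = 1) :
    (P * M * Q).charpoly = M.charpoly := by
  have hcm : charmatrix (P * M * Q)
      = (C : ℝ →+* ℝ[X]).mapMatrix P * charmatrix M * (C : ℝ →+* ℝ[X]).mapMatrix Q := by
    have hPQ : (C : ℝ →+* ℝ[X]).mapMatrix P * (C : ℝ →+* ℝ[X]).mapMatrix Q = 1 := by
      rw [← _root_.map_mul, h1, _root_.map_one]
    rw [charmatrix, charmatrix, Matrix.mul_sub, Matrix.sub_mul]
    congr 1
    · rw [← (Matrix.scalar_commute (X : ℝ[X]) (fun r' => Commute.all _ _)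
        ((C : ℝ →+* ℝ[X]).mapMatrix P)).eq, Matrix.mul_assoc, hPQ, Matrix.mul_one]
    · rw [← _root_.map_mul, ← _root_.map_mul]
  rw [Matrix.charpoly, hcm, det_mul, det_mul, Matrix.charpoly]
  have : ((C : ℝ →+* ℝ[X]).mapMatrix P).det * ((C : ℝ →+* ℝ[X]).mapMatrix Q).det = 1 := by
    rw [← det_mul, ← _root_.map_mul, h1, _root_.map_one, det_one]
  calc ((C : ℝ →+* ℝ[X]).mapMatrix P).det * (charmatrix M).det
        * ((C : ℝ →+* ℝ[X]).mapMatrix Q).det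
      = (charmatrix M).det * (((C : ℝ →+* ℝ[X]).mapMatrix P).det
        * ((C : ℝ →+* ℝ[X]).mapMatrix Q).det) := by ring
    _ = (charmatrix M).det := by rw [this, mul_one]

lemma myCharpolyDiag {m : Type*} [Fintype m] [DecidableEq m] (d : m → ℝ) :
    (Matrix.diagonal d).charpoly = ∏ i, (X - C (d i)) := by
  have hcm : charmatrix (Matrix.diagonal d) = Matrix.diagonal (fun i => (X : ℝ[X]) - C (d i)) := by
    ext i j
    by_cases h : i = j
    · subst h; simp
    · simp [h, Matrix.diagonal_apply_ne _ h]
  rw [Matrix.charpoly, hcm, det_diagonal]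

lemma mySpectral {m : Type*} [Fintype m] [DecidableEq m] {A : Matrix m m ℝ}
    (hA : A.IsHermitian) :
    A = (hA.eigenvectorUnitary : Matrix m m ℝ) * Matrix.diagonal hA.eigenvalues
        * star (hA.eigenvectorUnitary : Matrix m m ℝ) := by
  have h : (RCLike.ofReal ∘ hA.eigenvalues : m → ℝ) = hA.eigenvalues := by
    ext i; simp
  conv_lhs => rw [hA.spectral_theorem]
  rw [h]; rfl

lemma myEigMultiset {m : Type*} [Fintype m] [DecidableEq m] {Cm : Matrix m m ℝ}
    (hC : Cm.IsHermitian) (U : Matrix m m ℝ) (d : m → ℝ)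
    (hU1 : U * star U = 1) (hU2 : star U * U = 1)
    (hCd : Cm = U * Matrix.diagonal d * star U) :
    Multiset.map hC.eigenvalues Finset.univ.val = Multiset.map d Finset.univ.val := by
  have key : ∀ f : m → ℝ, (∏ i, ((X : ℝ[X]) - C (f i))).roots = Multiset.map f Finset.univ.val := by
    intro f
    rw [Finset.prod_eq_multiset_prod,
      show Multiset.map (fun i => (X : ℝ[X]) - C (f i)) Finset.univ.val
        = Multiset.map (fun a => (X : ℝ[X]) - C a) (Multiset.map f Finset.univ.val)
        by rw [Multiset.map_map]; rfl,
      Polynomial.roots_multiset_prod_X_sub_C]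
  have h1 : Cm.charpoly = ∏ i, ((X : ℝ[X]) - C (d i)) := by
    rw [hCd, myCharpolySimilar _ _ _ hU1 hU2, myCharpolyDiag]
  have hU1' : (hC.eigenvectorUnitary : Matrix m m ℝ) * star (hC.eigenvectorUnitary : Matrix m m ℝ) = 1 :=
    (Unitary.mem_iff.mp (hC.eigenvectorUnitary).2).2
  have hU2' : star (hC.eigenvectorUnitary : Matrix m m ℝ) * (hC.eigenvectorUnitary : Matrix m m ℝ) = 1 :=
    (Unitary.mem_iff.mp (hC.eigenvectorUnitary).2).1
  have h2 : Cm.charpoly = ∏ i, ((X : ℝ[X]) - C (hC.eigenvalues i)) := by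
    conv_lhs => rw [mySpectral hC]
    rw [myCharpolySimilar _ _ _ hU1' hU2', myCharpolyDiag]
  rw [← key, ← key, ← h1, ← h2]

lemma myTraceConj {m : Type*} [Fintype m] [DecidableEq m] (U M : Matrix m m ℝ)
    (h : star U * U = 1) : (U * M * star U).trace = M.trace := by
  rw [Matrix.trace_mul_cycle, h, Matrix.one_mul]

lemma myFrobTrace {k : ℕ} (M : Matrix (Fin k) (Fin k) ℝ) :
    frobNormSq M = (Mᵀ * M).trace := by
  rw [frobNormSq, Matrix.trace]
  rw [Finset.sum_comm]
  congr 1; ext j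
  simp [Matrix.diag, Matrix.mul_apply, sq]

lemma myStarConjDiag {m : Type*} [Fintype m] [DecidableEq m] (U : Matrix m m ℝ) (d : m → ℝ) :
    star (U * Matrix.diagonal d * star U) = U * Matrix.diagonal d * star U := by
  simp only [Matrix.star_mul, star_star, ← Matrix.mul_assoc]
  congr 1
  congr 1
  rw [Matrix.star_eq_conjTranspose, Matrix.diagonal_conjTranspose]
  congr 1

lemma myConjDiagMul {m : Type*} [Fintype m] [DecidableEq m] (U V : Matrix m m ℝ) (a b : m → ℝ) :
    (U * Matrix.diagonal a * star U) * (V * Matrix.diagonal b * star V)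
      = U * (Matrix.diagonal a * (star U * V) * Matrix.diagonal b * star V) := by
  simp only [Matrix.mul_assoc]

lemma myTraceDiagW {m : Type*} [Fintype m] [DecidableEq m] (W : Matrix m m ℝ) (a b : m → ℝ) :
    (Matrix.diagonal a * W * Matrix.diagonal b * star W).trace
      = ∑ i, ∑ j, a i * b j * (W i j)^2 := by
  rw [Matrix.trace]
  congr 1; ext i
  rw [Matrix.diag_apply, Matrix.mul_apply]
  congr 1; ext j
  rw [Matrix.mul_diagonal, Matrix.diagonal_mul, Matrix.star_eq_conjTranspose,
    Matrix.conjTranspose_apply]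
  simp only [star_trivial]
  ring

lemma myTraceConjDiagMul {m : Type*} [Fintype m] [DecidableEq m]
    (U V : Matrix m m ℝ) (a b : m → ℝ) :
    ((U * Matrix.diagonal a * star U) * (V * Matrix.diagonal b * star V)).trace
      = ∑ i, ∑ j, a i * b j * ((star U * V) i j)^2 := by
  rw [myConjDiagMul, Matrix.trace_mul_comm, ← myTraceDiagW (star U * V) a b]
  congr 1
  simp only [Matrix.star_mul, star_star, Matrix.mul_assoc]



lemma myArgmin (ρ τ σ : ℝ) (hρ : 0 < ρ) (hτ : 0 < τ) :
    ∃ γ : ℝ, 0 ≤ γ ∧ IsLeast ((fun γ : ℝ => ρ / 2 * (σ - γ ^ 2) ^ 2 + τ * γ) '' Set.Ici 0)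
      (ρ / 2 * (σ - γ ^ 2) ^ 2 + τ * γ) := by
  set g : ℝ → ℝ := fun γ => ρ / 2 * (σ - γ ^ 2) ^ 2 + τ * γ with hg
  have hcont : Continuous g := by fun_prop
  set K : ℝ := max 0 (ρ / 2 * σ ^ 2 / τ) with hK
  have hKmem : (0 : ℝ) ∈ Set.Icc (0:ℝ) K := ⟨le_refl 0, le_max_left _ _⟩
  obtain ⟨γ₀, hγ₀mem, hmin⟩ := isCompact_Icc.exists_isMinOn ⟨0, hKmem⟩ hcont.continuousOn
  refine ⟨γ₀, hγ₀mem.1, ⟨⟨γ₀, hγ₀mem.1, rfl⟩, ?_⟩⟩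
  rintro x ⟨γ, hγ, rfl⟩
  simp only [Set.mem_Ici] at hγ
  by_cases hKγ : γ ≤ K
  · exact hmin ⟨hγ, hKγ⟩
  · push_neg at hKγ
    have h0 : g γ₀ ≤ g 0 := hmin hKmem
    have h1 : g 0 = ρ / 2 * σ ^ 2 := by simp [hg]
    have h2 : ρ / 2 * σ ^ 2 / τ ≤ γ := le_of_lt (lt_of_le_of_lt (le_max_right _ _) hKγ)
    have h3 : ρ / 2 * σ ^ 2 ≤ τ * γ := by
      rw [div_le_iff₀ hτ] at h2
      linarith
    have h4 : τ * γ ≤ g γ := by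
      have : 0 ≤ ρ / 2 * (σ - γ ^ 2) ^ 2 := by positivity
      simp only [hg]; linarith
    calc g γ₀ ≤ g 0 := h0
      _ = ρ / 2 * σ ^ 2 := h1
      _ ≤ τ * γ := h3
      _ ≤ g γ := h4

end Helpers
/-- The infimum over all real n×n matrices L of
(ρ/2)·‖A − LᵀL‖_F² + τ·‖L‖_* equals ∑ᵢ min_{γ ≥ 0} [(ρ/2)·(σᵢ − γ²)² + τ·γ],
where σᵢ are the eigenvalues of the PSD matrix A, and this infimum is attained. -/
theorem stmt_0 (n : ℕ) (hn : 0 < n) (ρ τ : ℝ) (hρ : 0 < ρ) (hτ : 0 < τ)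
    (A : Matrix (Fin n) (Fin n) ℝ) (hA : A.PosSemidef) :
    IsLeast
      (Set.range fun L : Matrix (Fin n) (Fin n) ℝ =>
        ρ / 2 * frobNormSq (A - Lᵀ * L) + τ * nuclearNorm L)
      (∑ i, sInf ((fun γ : ℝ =>
        ρ / 2 * (hA.1.eigenvalues i - γ ^ 2) ^ 2 + τ * γ) '' Set.Ici 0)) := by
  classical
  set σ : Fin n → ℝ := hA.1.eigenvalues with hσdef
  set U : Matrix (Fin n) (Fin n) ℝ := (hA.1.eigenvectorUnitary : Matrix (Fin n) (Fin n) ℝ)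
    with hUdef
  have hU1 : U * star U = 1 := (Unitary.mem_iff.mp (hA.1.eigenvectorUnitary).2).2
  have hU2 : star U * U = 1 := (Unitary.mem_iff.mp (hA.1.eigenvectorUnitary).2).1
  have hAspec : A = U * Matrix.diagonal σ * star U := mySpectral hA.1
  have hbdd : ∀ s : ℝ, BddBelow ((fun γ : ℝ => ρ / 2 * (s - γ ^ 2) ^ 2 + τ * γ) '' Set.Ici 0) := by
    intro s
    refine ⟨0, ?_⟩
    rintro x ⟨γ, hγ, rfl⟩
    have hγ0 : (0:ℝ) ≤ γ := hγ
    positivity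
  constructor
  · -- attainment
    choose γ hγ0 hγleast using fun i => myArgmin ρ τ (σ i) hρ hτ
    set L : Matrix (Fin n) (Fin n) ℝ := U * Matrix.diagonal γ * star U with hLdef
    have hLstar : star L = L := myStarConjDiag U γ
    have hLT : Lᵀ = L := by rw [← myConjT, ← Matrix.star_eq_conjTranspose, hLstar]
    have hdd : Matrix.diagonal γ * Matrix.diagonal γ
        = Matrix.diagonal (fun i => γ i ^ 2) := by
      rw [Matrix.diagonal_mul_diagonal]
      congr 1; ext i; simp [sq]
    have hLL2 : L * L = U * Matrix.diagonal (fun i => γ i ^ 2) * star U := by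
      calc L * L
          = U * (Matrix.diagonal γ * (star U * U) * Matrix.diagonal γ * star U) :=
            myConjDiagMul U U γ γ
        _ = U * (Matrix.diagonal (fun i => γ i ^ 2) * star U) := by
            rw [hU2, Matrix.mul_one, hdd]
        _ = U * Matrix.diagonal (fun i => γ i ^ 2) * star U := by
            rw [Matrix.mul_assoc]
    have hLL : Lᴴ * L = U * Matrix.diagonal (fun i => γ i ^ 2) * star U := by
      rw [myConjT, hLT, hLL2]
    have hds : Matrix.diagonal σ - Matrix.diagonal (fun i => γ i ^ 2)
        = Matrix.diagonal (fun i => σ i - γ i ^ 2) := by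
      rw [Matrix.diagonal_sub]
    have hsub : A - Lᵀ * L = U * Matrix.diagonal (fun i => σ i - γ i ^ 2) * star U := by
      rw [hLT, hAspec, hLL2, ← Matrix.sub_mul, ← Matrix.mul_sub, hds]
    have hsubT : (U * Matrix.diagonal (fun i => σ i - γ i ^ 2) * star U)ᵀ
        = U * Matrix.diagonal (fun i => σ i - γ i ^ 2) * star U := by
      rw [← myConjT, ← Matrix.star_eq_conjTranspose, myStarConjDiag]
    have hfrob : frobNormSq (A - Lᵀ * L) = ∑ i, (σ i - γ i ^ 2) ^ 2 := by
      rw [hsub, myFrobTrace, hsubT]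
      have hmm : (U * Matrix.diagonal (fun i => σ i - γ i ^ 2) * star U)
          * (U * Matrix.diagonal (fun i => σ i - γ i ^ 2) * star U)
          = U * (Matrix.diagonal (fun i => (σ i - γ i ^ 2) * (σ i - γ i ^ 2))) * star U := by
        calc (U * Matrix.diagonal (fun i => σ i - γ i ^ 2) * star U)
            * (U * Matrix.diagonal (fun i => σ i - γ i ^ 2) * star U)
            = U * (Matrix.diagonal (fun i => σ i - γ i ^ 2) * (star U * U)
                * Matrix.diagonal (fun i => σ i - γ i ^ 2) * star U) := myConjDiagMul U U _ _
          _ = U * (Matrix.diagonal (fun i => (σ i - γ i ^ 2) * (σ i - γ i ^ 2)) * star U) := by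
              rw [hU2, Matrix.mul_one, Matrix.diagonal_mul_diagonal]
          _ = _ := by rw [Matrix.mul_assoc]
      rw [hmm, myTraceConj _ _ hU2, Matrix.trace_diagonal]
      congr 1; ext i; ring
    have hnucl : nuclearNorm L = ∑ i, γ i := by
      have hmult := myEigMultiset (Matrix.isHermitian_conjTranspose_mul_self L) U
        (fun i => γ i ^ 2) hU1 hU2 hLL
      have step : ∀ (f : Fin n → ℝ), ∑ i, Real.sqrt (f i)
          = (Multiset.map Real.sqrt (Multiset.map f Finset.univ.val)).sum := by
        intro f
        rw [Finset.sum_eq_multiset_sum, Multiset.map_map]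
        rfl
      have e0 : nuclearNorm L
          = ∑ i, Real.sqrt ((Matrix.isHermitian_conjTranspose_mul_self L).eigenvalues i) := rfl
      rw [e0, step, hmult, ← step]
      exact Finset.sum_congr rfl fun i _ => Real.sqrt_sq (hγ0 i)
    refine ⟨L, ?_⟩
    show ρ / 2 * frobNormSq (A - Lᵀ * L) + τ * nuclearNorm L = _
    rw [hfrob, hnucl, Finset.mul_sum, Finset.mul_sum, ← Finset.sum_add_distrib]
    refine Finset.sum_congr rfl fun i _ => ?_
    exact ((hγleast i).csInf_eq).symm
  · rintro x ⟨L, rfl⟩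
    have hB := Matrix.isHermitian_conjTranspose_mul_self L
    set μ : Fin n → ℝ := hB.eigenvalues with hμdef
    set V : Matrix (Fin n) (Fin n) ℝ := (hB.eigenvectorUnitary : Matrix (Fin n) (Fin n) ℝ)
      with hVdef
    have hV1 : V * star V = 1 := (Unitary.mem_iff.mp (hB.eigenvectorUnitary).2).2
    have hV2 : star V * V = 1 := (Unitary.mem_iff.mp (hB.eigenvectorUnitary).2).1
    have hBspec : Lᴴ * L = V * Matrix.diagonal μ * star V := mySpectral hB
    have hμ0 : ∀ j, 0 ≤ μ j := fun j => Matrix.eigenvalues_conjTranspose_mul_self_nonneg L j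
    set W : Matrix (Fin n) (Fin n) ℝ := star U * V with hWdef
    have hW1 : W * star W = 1 := by
      have h : W * star W = star U * (V * star V) * U := by
        rw [hWdef, Matrix.star_mul, star_star]
        simp only [Matrix.mul_assoc]
      rw [h, hV1, Matrix.mul_one, hU2]
    have hW2 : star W * W = 1 := by
      have h : star W * W = star V * (U * star U) * V := by
        rw [hWdef, Matrix.star_mul, star_star]
        simp only [Matrix.mul_assoc]
      rw [h, hU1, Matrix.mul_one, hV2]
    have hrow : ∀ i, ∑ j, (W i j)^2 = 1 := by
      intro i
      have h : (W * star W) i i = (1 : Matrix (Fin n) (Fin n) ℝ) i i := by rw [hW1]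
      rw [Matrix.mul_apply, Matrix.one_apply_eq] at h
      rw [← h]
      refine Finset.sum_congr rfl fun j _ => ?_
      rw [sq, Matrix.star_eq_conjTranspose, Matrix.conjTranspose_apply, star_trivial]
    have hcol : ∀ j, ∑ i, (W i j)^2 = 1 := by
      intro j
      have h : (star W * W) j j = (1 : Matrix (Fin n) (Fin n) ℝ) j j := by rw [hW2]
      rw [Matrix.mul_apply, Matrix.one_apply_eq] at h
      rw [← h]
      refine Finset.sum_congr rfl fun i _ => ?_
      rw [sq, Matrix.star_eq_conjTranspose, Matrix.conjTranspose_apply, star_trivial]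
    have diagsum : ∀ c : Fin n → ℝ, ∑ i, (∑ j, c i * c j * ((1 : Matrix (Fin n) (Fin n) ℝ) i j)^2)
        = ∑ i, c i ^ 2 := by
      intro c
      refine Finset.sum_congr rfl fun i _ => ?_
      rw [Finset.sum_eq_single i]
      · rw [Matrix.one_apply_eq]; ring
      · intro j _ hji
        rw [Matrix.one_apply_ne (Ne.symm hji)]
        ring
      · intro h; exact absurd (Finset.mem_univ i) h
    have tA2 : (A * A).trace = ∑ i, σ i ^ 2 := by
      conv_lhs => rw [hAspec]
      rw [myTraceConjDiagMul U U σ σ, hU2, diagsum]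
    have tB2 : ((Lᴴ * L) * (Lᴴ * L)).trace = ∑ j, μ j ^ 2 := by
      conv_lhs => rw [hBspec]
      rw [myTraceConjDiagMul V V μ μ, hV2, diagsum]
    have tAB : (A * (Lᴴ * L)).trace = ∑ i, ∑ j, σ i * μ j * (W i j)^2 := by
      conv_lhs => rw [hAspec, hBspec]
      rw [myTraceConjDiagMul U V σ μ, ← hWdef]
    have hBt : (Lᴴ * L)ᵀ = Lᴴ * L := by rw [← myConjT]; exact hB.eq
    have hAt : Aᵀ = A := by rw [← myConjT]; exact hA.1.eq
    have e1 : ∀ i j, (W i j)^2 * (σ i - μ j)^2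
        = σ i^2 * (W i j)^2 + μ j^2 * (W i j)^2 - 2*(σ i * μ j * (W i j)^2) := by
      intros; ring
    have eA : ∑ i, ∑ j, σ i ^2 * (W i j)^2 = ∑ i, σ i ^2 := by
      refine Finset.sum_congr rfl fun i _ => ?_
      rw [← Finset.mul_sum, hrow i, mul_one]
    have eB : ∑ i, ∑ j, μ j ^2 * (W i j)^2 = ∑ j, μ j ^2 := by
      rw [Finset.sum_comm]
      refine Finset.sum_congr rfl fun j _ => ?_
      rw [← Finset.mul_sum, hcol j, mul_one]
    have key : ∑ i, ∑ j, (W i j)^2 * (σ i - μ j)^2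
        = (∑ i, σ i^2) + (∑ j, μ j^2) - 2 * (∑ i, ∑ j, σ i * μ j * (W i j)^2) := by
      calc ∑ i, ∑ j, (W i j)^2 * (σ i - μ j)^2
          = ∑ i, ∑ j, (σ i^2 * (W i j)^2 + μ j^2 * (W i j)^2 - 2*(σ i * μ j * (W i j)^2)) :=
            Finset.sum_congr rfl fun i _ => Finset.sum_congr rfl fun j _ => e1 i j
        _ = (∑ i, ∑ j, σ i^2 * (W i j)^2) + (∑ i, ∑ j, μ j^2 * (W i j)^2)
            - 2 * (∑ i, ∑ j, σ i * μ j * (W i j)^2) := by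
            simp only [Finset.sum_sub_distrib, Finset.sum_add_distrib, Finset.mul_sum]
        _ = _ := by rw [eA, eB]
    have hfrob : frobNormSq (A - Lᵀ * L) = ∑ i, ∑ j, (W i j)^2 * (σ i - μ j)^2 := by
      have hBeq : Lᵀ * L = Lᴴ * L := by rw [myConjT]
      rw [hBeq, myFrobTrace, Matrix.transpose_sub, hAt, hBt, Matrix.sub_mul, Matrix.mul_sub,
        Matrix.mul_sub, Matrix.trace_sub, Matrix.trace_sub, Matrix.trace_sub, tA2, tB2, tAB,
        Matrix.trace_mul_comm (Lᴴ * L) A, tAB, key]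
      ring
    have hnuclL : nuclearNorm L = ∑ j, Real.sqrt (μ j) := rfl
    set d : Fin n → Fin n → ℝ := fun i j => ρ/2 * (σ i - μ j)^2 + τ * Real.sqrt (μ j) with hddef
    have hobj : ρ / 2 * frobNormSq (A - Lᵀ * L) + τ * nuclearNorm L
        = ∑ i, ∑ j, (W i j)^2 * d i j := by
      rw [hfrob, hnuclL]
      have eτ : τ * ∑ j, Real.sqrt (μ j) = ∑ i, ∑ j, (W i j)^2 * (τ * Real.sqrt (μ j)) := by
        rw [Finset.sum_comm, Finset.mul_sum]
        refine Finset.sum_congr rfl fun j _ => ?_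
        rw [← Finset.sum_mul, hcol j, one_mul]
      rw [eτ, Finset.mul_sum, ← Finset.sum_add_distrib]
      refine Finset.sum_congr rfl fun i _ => ?_
      rw [Finset.mul_sum, ← Finset.sum_add_distrib]
      refine Finset.sum_congr rfl fun j _ => ?_
      simp only [hddef]
      ring
    have hp : Matrix.of (fun i j => (W i j)^2) ∈ doublyStochastic ℝ (Fin n) := by
      rw [mem_doublyStochastic_iff_sum]
      exact ⟨fun i j => sq_nonneg _, fun i => hrow i, fun j => hcol j⟩
    obtain ⟨w, hw0, hw1, hwp⟩ := exists_eq_sum_perm_of_mem_doublyStochastic hp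
    have hpval : ∀ i j, (W i j)^2 = ∑ π : Equiv.Perm (Fin n), w π * (π.permMatrix ℝ) i j := by
      intro i j
      have h : (∑ π : Equiv.Perm (Fin n), w π • π.permMatrix ℝ) i j
          = Matrix.of (fun i j => (W i j)^2) i j := by rw [hwp]
      rw [Matrix.sum_apply] at h
      simp only [Matrix.smul_apply, smul_eq_mul, Matrix.of_apply] at h
      exact h.symm
    have hperm : ∀ π : Equiv.Perm (Fin n),
        (∑ i, sInf ((fun γ : ℝ => ρ / 2 * (σ i - γ ^ 2) ^ 2 + τ * γ) '' Set.Ici 0))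
          ≤ ∑ i, d i (π i) := by
      intro π
      refine Finset.sum_le_sum fun i _ => ?_
      have hmem : ρ / 2 * (σ i - Real.sqrt (μ (π i)) ^ 2) ^ 2 + τ * Real.sqrt (μ (π i))
          ∈ ((fun γ : ℝ => ρ / 2 * (σ i - γ ^ 2) ^ 2 + τ * γ) '' Set.Ici 0) :=
        ⟨Real.sqrt (μ (π i)), Real.sqrt_nonneg _, rfl⟩
      calc sInf ((fun γ : ℝ => ρ / 2 * (σ i - γ ^ 2) ^ 2 + τ * γ) '' Set.Ici 0)
          ≤ ρ / 2 * (σ i - Real.sqrt (μ (π i)) ^ 2) ^ 2 + τ * Real.sqrt (μ (π i)) :=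
            csInf_le (hbdd (σ i)) hmem
        _ = d i (π i) := by rw [Real.sq_sqrt (hμ0 (π i))]
    have hrowperm : ∀ (π : Equiv.Perm (Fin n)) i, ∑ j, (π.permMatrix ℝ) i j * d i j
        = d i (π i) := by
      intro π i
      rw [Finset.sum_eq_single (π i)]
      · simp [Equiv.Perm.permMatrix, PEquiv.toMatrix_apply, Equiv.toPEquiv_apply]
      · intro j _ hji
        have : (π.permMatrix ℝ) i j = 0 := by
          simp [Equiv.Perm.permMatrix, PEquiv.toMatrix_apply, Equiv.toPEquiv_apply, Ne.symm hji]
        rw [this, zero_mul]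
      · intro h; exact absurd (Finset.mem_univ _) h
    have hsum : ∑ i, ∑ j, (W i j)^2 * d i j
        = ∑ π : Equiv.Perm (Fin n), w π * ∑ i, d i (π i) := by
      calc ∑ i, ∑ j, (W i j)^2 * d i j
          = ∑ i, ∑ j, ∑ π : Equiv.Perm (Fin n), w π * ((π.permMatrix ℝ) i j * d i j) := by
            refine Finset.sum_congr rfl fun i _ => Finset.sum_congr rfl fun j _ => ?_
            rw [hpval i j, Finset.sum_mul]
            exact Finset.sum_congr rfl fun π _ => by ring
        _ = ∑ π : Equiv.Perm (Fin n), ∑ i, ∑ j, w π * ((π.permMatrix ℝ) i j * d i j) := by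
            have h1 : ∀ i : Fin n,
                ∑ j, ∑ π : Equiv.Perm (Fin n), w π * ((π.permMatrix ℝ) i j * d i j)
                  = ∑ π : Equiv.Perm (Fin n), ∑ j, w π * ((π.permMatrix ℝ) i j * d i j) :=
              fun i => Finset.sum_comm
            simp only [h1]
            exact Finset.sum_comm
        _ = ∑ π : Equiv.Perm (Fin n), w π * ∑ i, d i (π i) := by
            refine Finset.sum_congr rfl fun π _ => ?_
            rw [Finset.mul_sum]
            refine Finset.sum_congr rfl fun i _ => ?_
            rw [← Finset.mul_sum, hrowperm π i]
    show (∑ i, sInf ((fun γ : ℝ => ρ / 2 * (σ i - γ ^ 2) ^ 2 + τ * γ) '' Set.Ici 0))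
      ≤ ρ / 2 * frobNormSq (A - Lᵀ * L) + τ * nuclearNorm L
    rw [hobj, hsum]
    calc (∑ i, sInf ((fun γ : ℝ => ρ / 2 * (σ i - γ ^ 2) ^ 2 + τ * γ) '' Set.Ici 0))
        = ∑ π : Equiv.Perm (Fin n), w π
            * (∑ i, sInf ((fun γ : ℝ => ρ / 2 * (σ i - γ ^ 2) ^ 2 + τ * γ) '' Set.Ici 0)) := by
          rw [← Finset.sum_mul, hw1, one_mul]
      _ ≤ ∑ π : Equiv.Perm (Fin n), w π * ∑ i, d i (π i) :=
          Finset.sum_le_sum fun π _ => mul_le_mul_of_nonneg_left (hperm π) (hw0 π)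
end

section
/- Let n be a positive integer, let ρ > 0 and τ > 0 be real numbers, and let A be a real symmetric positive semidefinite n×n matrix with eigenvalues σ₁, …, σₙ ≥ 0. Then for every real n×n matrix L, (ρ/2)·‖A − LᵀL‖_F² + τ·‖L‖_* ≥ Σᵢ₌₁ⁿ inf_{γ ≥ 0} [ (ρ/2)·(σᵢ − γ²)² + τ·γ ]. -/
open Matrix BigOperators Finset

lemma sum_swap3 {M : Type*} [AddCommMonoid M] {N : ℕ} (f : Fin N → Fin N → Fin N → M) :
    ∑ i, ∑ j, ∑ k, f i j k = ∑ k, ∑ i, ∑ j, f i j k :=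
  (Finset.sum_congr rfl fun _ _ => Finset.sum_comm).trans Finset.sum_comm

lemma quad_sum {N : ℕ} (c d : Fin N → ℝ) (a b : Fin N → Fin N → ℝ) :
    ∑ i, ∑ j, (∑ k, c k * (a k i * a k j)) * (∑ l, d l * (b l i * b l j))
      = ∑ k, ∑ l, (c k * d l) * (∑ i, a k i * b l i)^2 := by
  have h : ∀ k l, (c k * d l) * (∑ i, a k i * b l i)^2
      = ∑ i, ∑ j, (c k * (a k i * a k j)) * (d l * (b l i * b l j)) := by
    intro k l
    rw [sq, Finset.sum_mul_sum, Finset.mul_sum]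
    refine Finset.sum_congr rfl fun i _ => ?_
    rw [Finset.mul_sum]
    exact Finset.sum_congr rfl fun j _ => by ring
  simp only [h]
  simp only [Finset.sum_mul_sum]
  rw [sum_swap3]
  refine Finset.sum_congr rfl fun k _ => ?_
  exact sum_swap3 fun i j l => c k * (a k i * a k j) * (d l * (b l i * b l j))

lemma entrywise_spectral {N : ℕ} {A : Matrix (Fin N) (Fin N) ℝ} (hA : A.IsHermitian)
    (i j : Fin N) :
    A i j = ∑ k, hA.eigenvalues k * (hA.eigenvectorBasis k i * hA.eigenvectorBasis k j) := by
  conv_lhs => rw [hA.spectral_theorem]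
  simp [Matrix.mul_apply, Matrix.diagonal_apply, Finset.sum_mul, star_eq_conjTranspose,
    Matrix.conjTranspose_apply]
  exact Finset.sum_congr rfl fun k _ => by ring

lemma frob_decomp {N : ℕ} {A B : Matrix (Fin N) (Fin N) ℝ}
    (hA : A.IsHermitian) (hB : B.IsHermitian) :
    ∃ S : Fin N → Fin N → ℝ, (∀ k l, 0 ≤ S k l) ∧ (∀ k, ∑ l, S k l = 1) ∧
      (∀ l, ∑ k, S k l = 1) ∧
      frobNormSq (A - B) = ∑ k, ∑ l, S k l * (hA.eigenvalues k - hB.eigenvalues l)^2 := by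
  classical
  set u : Fin N → EuclideanSpace ℝ (Fin N) := fun k => hA.eigenvectorBasis k with hu
  set v : Fin N → EuclideanSpace ℝ (Fin N) := fun k => hB.eigenvectorBasis k with hv
  set W : Fin N → Fin N → ℝ := fun k l => ∑ i, u k i * v l i with hWdef
  have hinner_uv : ∀ k l, (inner ℝ (u k) (v l) : ℝ) = W k l := by
    intro k l; rw [PiLp.inner_apply]; simp [W, mul_comm]
  have hinner_uu : ∀ k l, (inner ℝ (u k) (u l) : ℝ) = if k = l then 1 else 0 := by
    intro k l
    simpa using orthonormal_iff_ite.mp hA.eigenvectorBasis.orthonormal k l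
  have hinner_vv : ∀ k l, (inner ℝ (v k) (v l) : ℝ) = if k = l then 1 else 0 := by
    intro k l
    simpa using orthonormal_iff_ite.mp hB.eigenvectorBasis.orthonormal k l
  have huu : ∀ k l, (∑ i, u k i * u l i) = if k = l then 1 else 0 := by
    intro k l; rw [← hinner_uu k l, PiLp.inner_apply]; simp [mul_comm]
  have hvv : ∀ k l, (∑ i, v k i * v l i) = if k = l then 1 else 0 := by
    intro k l; rw [← hinner_vv k l, PiLp.inner_apply]; simp [mul_comm]
  have hrow : ∀ k, ∑ l, (W k l)^2 = 1 := by
    intro k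
    have h := hB.eigenvectorBasis.sum_inner_mul_inner (u k) (u k)
    rw [hinner_uu k k] at h
    norm_num at h
    rw [← h]
    refine Finset.sum_congr rfl fun l _ => ?_
    rw [sq]
    congr 1
    exact Finset.sum_congr rfl fun x _ => mul_comm _ _
  have hcol : ∀ l, ∑ k, (W k l)^2 = 1 := by
    intro l
    have h := hA.eigenvectorBasis.sum_inner_mul_inner (v l) (v l)
    rw [hinner_vv l l] at h
    norm_num at h
    rw [← h]
    refine Finset.sum_congr rfl fun k _ => ?_
    rw [sq]
    congr 1
    exact Finset.sum_congr rfl fun x _ => mul_comm _ _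
  refine ⟨fun k l => (W k l)^2, fun k l => sq_nonneg _, hrow, hcol, ?_⟩
  set lam := hA.eigenvalues with hlam
  set mu := hB.eigenvalues with hmu
  have hAent : ∀ i j, A i j = ∑ k, lam k * (u k i * u k j) := fun i j =>
    entrywise_spectral hA i j
  have hBent : ∀ i j, B i j = ∑ l, mu l * (v l i * v l j) := fun i j =>
    entrywise_spectral hB i j
  have T1 : ∑ i, ∑ j, A i j * A i j = ∑ k, lam k ^ 2 := by
    calc ∑ i, ∑ j, A i j * A i j
        = ∑ i, ∑ j, (∑ k, lam k * (u k i * u k j)) * (∑ l, lam l * (u l i * u l j)) := by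
          simp only [hAent]
      _ = ∑ k, ∑ l, (lam k * lam l) * (∑ i, u k i * u l i)^2 := quad_sum lam lam _ _
      _ = ∑ k, lam k ^ 2 := by
          refine Finset.sum_congr rfl fun k _ => ?_
          rw [Finset.sum_eq_single k]
          · rw [huu k k, if_pos rfl]; ring
          · intro l _ hlk
            rw [huu k l, if_neg (Ne.symm hlk)]; ring
          · intro h; exact absurd (Finset.mem_univ k) h
  have T3 : ∑ i, ∑ j, B i j * B i j = ∑ l, mu l ^ 2 := by
    calc ∑ i, ∑ j, B i j * B i j
        = ∑ i, ∑ j, (∑ k, mu k * (v k i * v k j)) * (∑ l, mu l * (v l i * v l j)) := by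
          simp only [hBent]
      _ = ∑ k, ∑ l, (mu k * mu l) * (∑ i, v k i * v l i)^2 := quad_sum mu mu _ _
      _ = ∑ l, mu l ^ 2 := by
          refine Finset.sum_congr rfl fun k _ => ?_
          rw [Finset.sum_eq_single k]
          · rw [hvv k k, if_pos rfl]; ring
          · intro l _ hlk
            rw [hvv k l, if_neg (Ne.symm hlk)]; ring
          · intro h; exact absurd (Finset.mem_univ k) h
  have T2 : ∑ i, ∑ j, A i j * B i j = ∑ k, ∑ l, (lam k * mu l) * (W k l)^2 := by
    calc ∑ i, ∑ j, A i j * B i j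
        = ∑ i, ∑ j, (∑ k, lam k * (u k i * u k j)) * (∑ l, mu l * (v l i * v l j)) := by
          simp only [hAent, hBent]
      _ = ∑ k, ∑ l, (lam k * mu l) * (∑ i, u k i * v l i)^2 := quad_sum lam mu _ _
      _ = ∑ k, ∑ l, (lam k * mu l) * (W k l)^2 := rfl
  have expandL : frobNormSq (A - B)
      = (∑ i, ∑ j, A i j * A i j) - 2 * (∑ i, ∑ j, A i j * B i j)
        + (∑ i, ∑ j, B i j * B i j) := by
    have hpt : ∀ i j : Fin N, (A i j - B i j)^2
        = A i j * A i j - 2 * (A i j * B i j) + B i j * B i j := fun i j => by ring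
    simp only [frobNormSq, Matrix.sub_apply, hpt, Finset.sum_add_distrib,
      Finset.sum_sub_distrib, Finset.mul_sum]
  rw [expandL, T1, T2, T3]
  -- RHS expansion
  have expandR : ∑ k, ∑ l, (W k l)^2 * (lam k - mu l)^2
      = (∑ k, lam k ^ 2) - 2 * (∑ k, ∑ l, (lam k * mu l) * (W k l)^2)
        + (∑ l, mu l ^ 2) := by
    have hpt : ∀ k l : Fin N, (W k l)^2 * (lam k - mu l)^2
        = lam k ^ 2 * (W k l)^2 - 2 * ((lam k * mu l) * (W k l)^2)
          + mu l ^ 2 * (W k l)^2 := fun k l => by ring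
    have e1 : ∑ k, ∑ l, lam k ^ 2 * W k l ^ 2 = ∑ k, lam k ^ 2 := by
      refine Finset.sum_congr rfl fun k _ => ?_
      rw [← Finset.mul_sum, hrow k, mul_one]
    have e2 : ∑ k, ∑ l, 2 * (lam k * mu l * W k l ^ 2)
        = 2 * ∑ k, ∑ l, lam k * mu l * W k l ^ 2 := by
      simp only [← Finset.mul_sum]
    have e3 : ∑ k : Fin N, ∑ l, mu l ^ 2 * W k l ^ 2 = ∑ l, mu l ^ 2 := by
      rw [Finset.sum_comm]
      refine Finset.sum_congr rfl fun l _ => ?_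
      rw [← Finset.mul_sum, hcol l, mul_one]
    simp only [hpt, Finset.sum_add_distrib, Finset.sum_sub_distrib]
    rw [e1, e2, e3]
  rw [expandR]

/-- For every real n×n matrix L,
(ρ/2)·‖A − LᵀL‖_F² + τ·‖L‖_* ≥ ∑ᵢ inf_{γ ≥ 0} [(ρ/2)·(σᵢ − γ²)² + τ·γ],
where σᵢ are the eigenvalues of the PSD matrix A. -/
theorem stmt_1 (n : ℕ) (hn : 0 < n) (ρ τ : ℝ) (hρ : 0 < ρ) (hτ : 0 < τ)
    (A : Matrix (Fin n) (Fin n) ℝ) (hA : A.PosSemidef)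
    (L : Matrix (Fin n) (Fin n) ℝ) :
    ρ / 2 * frobNormSq (A - Lᵀ * L) + τ * nuclearNorm L ≥
      ∑ i, sInf ((fun γ : ℝ =>
        ρ / 2 * (hA.1.eigenvalues i - γ ^ 2) ^ 2 + τ * γ) '' Set.Ici 0) := by
  classical
  have hBpsd : (Lᵀ * L).PosSemidef := Matrix.posSemidef_conjTranspose_mul_self L
  have hB : (Lᵀ * L).IsHermitian := hBpsd.1
  obtain ⟨S, hS0, hrow, hcol, hfrob⟩ := frob_decomp hA.1 hB
  set lam := hA.1.eigenvalues with hlam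
  set mu := hB.eigenvalues with hmu
  have hmu0 : ∀ l, 0 ≤ mu l := fun l => hBpsd.eigenvalues_nonneg l
  have hnuc : nuclearNorm L = ∑ l, Real.sqrt (mu l) := by
    have key : ∀ (M : Matrix (Fin n) (Fin n) ℝ) (h1 : M.IsHermitian)
        (M' : Matrix (Fin n) (Fin n) ℝ) (h2 : M'.IsHermitian), M = M' →
        h1.eigenvalues = h2.eigenvalues := by
      rintro M h1 _ h2 rfl; rfl
    have hLL : Lᴴ * L = Lᵀ * L := by rw [conjTranspose_eq_transpose_of_trivial]
    unfold nuclearNorm singularValues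
    rw [key _ (isHermitian_conjTranspose_mul_self L) _ hB hLL]
  set g : Fin n → ℝ → ℝ := fun i γ => ρ / 2 * (lam i - γ ^ 2) ^ 2 + τ * γ with hg
  have hbdd : ∀ i, BddBelow ((g i) '' Set.Ici 0) := by
    intro i
    refine ⟨0, ?_⟩
    rintro x ⟨γ, hγ, rfl⟩
    have hγ0 : (0:ℝ) ≤ γ := hγ
    have : (0:ℝ) ≤ ρ / 2 * (lam i - γ ^ 2) ^ 2 :=
      mul_nonneg (by positivity) (sq_nonneg _)
    simp only [g]
    nlinarith [mul_nonneg hτ.le hγ0]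
  have hinf_le : ∀ i l, sInf ((g i) '' Set.Ici 0)
      ≤ ρ / 2 * (lam i - mu l) ^ 2 + τ * Real.sqrt (mu l) := by
    intro i l
    have hval : g i (Real.sqrt (mu l)) = ρ / 2 * (lam i - mu l) ^ 2 + τ * Real.sqrt (mu l) := by
      simp [g, Real.sq_sqrt (hmu0 l)]
    calc sInf ((g i) '' Set.Ici 0) ≤ g i (Real.sqrt (mu l)) :=
          csInf_le (hbdd i) ⟨_, Real.sqrt_nonneg _, rfl⟩
      _ = _ := hval
  rw [ge_iff_le]
  calc ∑ i, sInf ((g i) '' Set.Ici 0)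
      = ∑ i, ∑ l, S i l * sInf ((g i) '' Set.Ici 0) := by
        refine Finset.sum_congr rfl fun i _ => ?_
        rw [← Finset.sum_mul, hrow i, one_mul]
    _ ≤ ∑ i, ∑ l, S i l * (ρ / 2 * (lam i - mu l) ^ 2 + τ * Real.sqrt (mu l)) := by
        refine Finset.sum_le_sum fun i _ => Finset.sum_le_sum fun l _ =>
          mul_le_mul_of_nonneg_left (hinf_le i l) (hS0 i l)
    _ = ρ / 2 * (∑ i, ∑ l, S i l * (lam i - mu l) ^ 2)
        + τ * (∑ i, ∑ l, S i l * Real.sqrt (mu l)) := by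
        simp only [mul_add, Finset.sum_add_distrib, Finset.mul_sum]
        congr 1
        · exact Finset.sum_congr rfl fun i _ => Finset.sum_congr rfl fun l _ => by ring
        · exact Finset.sum_congr rfl fun i _ => Finset.sum_congr rfl fun l _ => by ring
    _ = ρ / 2 * (∑ i, ∑ l, S i l * (lam i - mu l) ^ 2)
        + τ * (∑ l, (∑ i, S i l) * Real.sqrt (mu l)) := by
        congr 1
        rw [Finset.sum_comm]
        exact congrArg (τ * ·) (Finset.sum_congr rfl fun l _ => (Finset.sum_mul _ _ _).symm)
    _ = ρ / 2 * frobNormSq (A - Lᵀ * L) + τ * nuclearNorm L := by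
        rw [hfrob, hnuc]
        congr 1
        refine congrArg (τ * ·) ?_
        refine Finset.sum_congr rfl fun l _ => ?_
        rw [hcol l, one_mul]
end

section
/- Let n be a positive integer, let ρ > 0 and τ > 0 be real numbers, and let A be a real symmetric positive semidefinite n×n matrix with eigendecomposition A = U Σ Uᵀ, where U is an n×n orthogonal matrix and Σ is diagonal with nonnegative diagonal entries σ₁, …, σₙ. For each i, choose γᵢ* ≥ 0 minimizing the function γ ↦ (ρ/2)·(σᵢ − γ²)² + τ·γ over [0, ∞), and let Γ* be the diagonal matrix with entries γ₁*, …, γₙ*. Then L* = Γ* Uᵀ is a global minimizer over all real n×n matrices L of (ρ/2)·‖A − LᵀL‖_F² + τ·‖L‖_*. -/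
open Matrix BigOperators Finset

section aux
variable {n : ℕ}

lemma frobNormSq_eq_trace (M : Matrix (Fin n) (Fin n) ℝ) :
    frobNormSq M = (Mᵀ * M).trace := by
  simp only [frobNormSq, Matrix.trace, Matrix.diag, Matrix.mul_apply, Matrix.transpose_apply,
    pow_two]
  exact Finset.sum_comm

lemma frobNormSq_transpose (M : Matrix (Fin n) (Fin n) ℝ) :
    frobNormSq Mᵀ = frobNormSq M := by
  simp only [frobNormSq, Matrix.transpose_apply]
  exact Finset.sum_comm

lemma frobNormSq_mul_orth_left (Q M : Matrix (Fin n) (Fin n) ℝ) (hQ : Qᵀ * Q = 1) :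
    frobNormSq (Q * M) = frobNormSq M := by
  rw [frobNormSq_eq_trace, frobNormSq_eq_trace, Matrix.transpose_mul, Matrix.mul_assoc,
    ← Matrix.mul_assoc Qᵀ, hQ, Matrix.one_mul]

lemma frobNormSq_mul_orth_right (M R : Matrix (Fin n) (Fin n) ℝ) (hR : R * Rᵀ = 1) :
    frobNormSq (M * R) = frobNormSq M := by
  rw [← frobNormSq_transpose (M * R), Matrix.transpose_mul,
    frobNormSq_mul_orth_left _ _ (by rwa [Matrix.transpose_transpose]), frobNormSq_transpose]

lemma rowsum_sq (P : Matrix (Fin n) (Fin n) ℝ) (h : P * Pᵀ = 1) (i : Fin n) :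
    ∑ k, (P i k)^2 = 1 := by
  have h2 := congrFun (congrFun h i) i
  simpa [Matrix.mul_apply, Matrix.one_apply, pow_two] using h2

lemma colsum_sq (P : Matrix (Fin n) (Fin n) ℝ) (h : Pᵀ * P = 1) (k : Fin n) :
    ∑ i, (P i k)^2 = 1 := by
  have := rowsum_sq Pᵀ (by rwa [Matrix.transpose_transpose]) k
  simpa using this

lemma real_spectral (B : Matrix (Fin n) (Fin n) ℝ) (hB : B.IsHermitian) :
    ∃ V : Matrix (Fin n) (Fin n) ℝ, Vᵀ * V = 1 ∧ V * Vᵀ = 1 ∧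
      B = V * diagonal hB.eigenvalues * Vᵀ := by
  refine ⟨(hB.eigenvectorUnitary : Matrix (Fin n) (Fin n) ℝ), ?_, ?_, ?_⟩
  · have h := (Unitary.mem_iff.mp hB.eigenvectorUnitary.2).1
    simpa [Matrix.star_eq_conjTranspose, conjTranspose_eq_transpose_of_trivial] using h
  · have h := (Unitary.mem_iff.mp hB.eigenvectorUnitary.2).2
    simpa [Matrix.star_eq_conjTranspose, conjTranspose_eq_transpose_of_trivial] using h
  · have h := hB.spectral_theorem
    rw [RCLike.ofReal_real_eq_id] at h
    simpa [Matrix.star_eq_conjTranspose, conjTranspose_eq_transpose_of_trivial] using h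

lemma frob_expand (U V : Matrix (Fin n) (Fin n) ℝ) (hU : Uᵀ * U = 1) (hV : Vᵀ * V = 1)
    (σ μ : Fin n → ℝ) :
    frobNormSq (U * diagonal σ * Uᵀ - V * diagonal μ * Vᵀ) =
      ∑ i, ∑ k, ((Uᵀ * V) i k)^2 * (σ i - μ k)^2 := by
  have hV' : V * Vᵀ = 1 := mul_eq_one_comm.mp hV
  have hU'' : U * Uᵀ = 1 := mul_eq_one_comm.mp hU
  set M := U * diagonal σ * Uᵀ - V * diagonal μ * Vᵀ with hM
  have key : Uᵀ * M * V = diagonal σ * (Uᵀ * V) - (Uᵀ * V) * diagonal μ := by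
    rw [hM, Matrix.mul_sub, Matrix.sub_mul]
    congr 1
    · calc Uᵀ * (U * diagonal σ * Uᵀ) * V = (Uᵀ * U) * diagonal σ * (Uᵀ * V) := by
            noncomm_ring
      _ = diagonal σ * (Uᵀ * V) := by rw [hU, Matrix.one_mul]
    · calc Uᵀ * (V * diagonal μ * Vᵀ) * V = (Uᵀ * V) * diagonal μ * (Vᵀ * V) := by
            noncomm_ring
      _ = (Uᵀ * V) * diagonal μ := by rw [hV, Matrix.mul_one]
  have h1 : frobNormSq M = frobNormSq (Uᵀ * M * V) := by
    rw [frobNormSq_mul_orth_right _ _ hV', frobNormSq_mul_orth_left _ _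
      (by rwa [Matrix.transpose_transpose])]
  rw [h1, key]
  simp only [frobNormSq, Matrix.sub_apply, Matrix.diagonal_mul, Matrix.mul_diagonal]
  congr 1; ext i; congr 1; ext k; ring

lemma lower_bound (ρ τ : ℝ) (U : Matrix (Fin n) (Fin n) ℝ) (σ γs : Fin n → ℝ)
    (hU : Uᵀ * U = 1)
    (hmin : ∀ i, ∀ γ : ℝ, 0 ≤ γ →
      ρ / 2 * (σ i - γs i ^ 2) ^ 2 + τ * γs i ≤ ρ / 2 * (σ i - γ ^ 2) ^ 2 + τ * γ)
    (L : Matrix (Fin n) (Fin n) ℝ) :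
    ∑ i, (ρ / 2 * (σ i - γs i ^ 2) ^ 2 + τ * γs i) ≤
      ρ / 2 * frobNormSq (U * diagonal σ * Uᵀ - Lᵀ * L) + τ * nuclearNorm L := by
  have hU' : U * Uᵀ = 1 := mul_eq_one_comm.mp hU
  have hH := Matrix.isHermitian_conjTranspose_mul_self L
  set μ := hH.eigenvalues with hμdef
  obtain ⟨V, hV, hV', hspec⟩ := real_spectral _ hH
  have hLL : Lᵀ * L = V * diagonal μ * Vᵀ := by
    rw [← conjTranspose_eq_transpose_of_trivial L]; exact hspec
  have hμ : ∀ k, 0 ≤ μ k := fun k => Matrix.eigenvalues_conjTranspose_mul_self_nonneg L k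
  set P := Uᵀ * V with hPdef
  have hPP : P * Pᵀ = 1 := by
    rw [hPdef, Matrix.transpose_mul, Matrix.transpose_transpose]
    calc Uᵀ * V * (Vᵀ * U) = Uᵀ * (V * Vᵀ) * U := by noncomm_ring
    _ = Uᵀ * U := by rw [hV', Matrix.mul_one]
    _ = 1 := hU
  have hPtP : Pᵀ * P = 1 := mul_eq_one_comm.mp hPP
  have hrow : ∀ i, ∑ k, (P i k)^2 = 1 := rowsum_sq P hPP
  have hcol : ∀ k, ∑ i, (P i k)^2 = 1 := colsum_sq P hPtP
  have hfrob : frobNormSq (U * diagonal σ * Uᵀ - Lᵀ * L) =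
      ∑ i, ∑ k, (P i k)^2 * (σ i - μ k)^2 := by
    rw [hLL]; exact frob_expand U V hU hV σ μ
  have hnuc : nuclearNorm L = ∑ k, Real.sqrt (μ k) := rfl
  have hnuc2 : nuclearNorm L = ∑ i, ∑ k, (P i k)^2 * Real.sqrt (μ k) := by
    rw [hnuc, Finset.sum_comm]
    refine Finset.sum_congr rfl fun k _ => ?_
    rw [← Finset.sum_mul, hcol k, one_mul]
  calc ∑ i, (ρ / 2 * (σ i - γs i ^ 2) ^ 2 + τ * γs i)
      = ∑ i, ∑ k, (P i k)^2 * (ρ / 2 * (σ i - γs i ^ 2) ^ 2 + τ * γs i) := by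
        refine Finset.sum_congr rfl fun i _ => ?_
        rw [← Finset.sum_mul, hrow i, one_mul]
    _ ≤ ∑ i, ∑ k, (P i k)^2 * (ρ / 2 * (σ i - μ k) ^ 2 + τ * Real.sqrt (μ k)) := by
        refine Finset.sum_le_sum fun i _ => Finset.sum_le_sum fun k _ => ?_
        refine mul_le_mul_of_nonneg_left ?_ (sq_nonneg _)
        have h := hmin i (Real.sqrt (μ k)) (Real.sqrt_nonneg _)
        rwa [Real.sq_sqrt (hμ k)] at h
    _ = ρ / 2 * frobNormSq (U * diagonal σ * Uᵀ - Lᵀ * L) + τ * nuclearNorm L := by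
        rw [hfrob, hnuc2, Finset.mul_sum, Finset.mul_sum, ← Finset.sum_add_distrib]
        refine Finset.sum_congr rfl fun i _ => ?_
        rw [Finset.mul_sum, Finset.mul_sum, ← Finset.sum_add_distrib]
        refine Finset.sum_congr rfl fun k _ => ?_
        ring

lemma upper_bound (ρ τ : ℝ) (hτ : 0 ≤ τ) (U : Matrix (Fin n) (Fin n) ℝ) (σ γs : Fin n → ℝ)
    (hU : Uᵀ * U = 1) (hγs : ∀ i, 0 ≤ γs i) :
    ρ / 2 * frobNormSq (U * diagonal σ * Uᵀ - (diagonal γs * Uᵀ)ᵀ * (diagonal γs * Uᵀ)) +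
        τ * nuclearNorm (diagonal γs * Uᵀ) ≤
      ∑ i, (ρ / 2 * (σ i - γs i ^ 2) ^ 2 + τ * γs i) := by
  have hU' : U * Uᵀ = 1 := mul_eq_one_comm.mp hU
  set M := diagonal γs * Uᵀ with hMdef
  have hM : Mᵀ * M = U * diagonal (fun i => γs i ^ 2) * Uᵀ := by
    rw [hMdef, Matrix.transpose_mul, Matrix.transpose_transpose, Matrix.diagonal_transpose]
    calc U * diagonal γs * (diagonal γs * Uᵀ) = U * (diagonal γs * diagonal γs) * Uᵀ := by
          noncomm_ring
    _ = U * diagonal (fun i => γs i ^ 2) * Uᵀ := by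
          have hd : diagonal γs * diagonal γs = diagonal (fun i => γs i ^ 2) := by
            rw [Matrix.diagonal_mul_diagonal]
            funext i; simp [pow_two]
          rw [hd]
  -- Frobenius part (exact)
  have hfrob : frobNormSq (U * diagonal σ * Uᵀ - Mᵀ * M) = ∑ i, (σ i - γs i ^ 2) ^ 2 := by
    rw [hM, frob_expand U U hU hU σ (fun i => γs i ^ 2), hU]
    refine Finset.sum_congr rfl fun i _ => ?_
    simp [Matrix.one_apply, ite_pow, ite_mul]
  -- nuclear part
  have hH := Matrix.isHermitian_conjTranspose_mul_self M
  set ν := hH.eigenvalues with hνdef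
  obtain ⟨V, hV, hV', hspec⟩ := real_spectral _ hH
  have hν : ∀ k, 0 ≤ ν k := fun k => Matrix.eigenvalues_conjTranspose_mul_self_nonneg M k
  have hLL : Mᵀ * M = V * diagonal ν * Vᵀ := by
    rw [← conjTranspose_eq_transpose_of_trivial M]; exact hspec
  set P := Uᵀ * V with hPdef
  have hPP : P * Pᵀ = 1 := by
    rw [hPdef, Matrix.transpose_mul, Matrix.transpose_transpose]
    calc Uᵀ * V * (Vᵀ * U) = Uᵀ * (V * Vᵀ) * U := by noncomm_ring
    _ = Uᵀ * U := by rw [hV', Matrix.mul_one]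
    _ = 1 := hU
  have hPtP : Pᵀ * P = 1 := mul_eq_one_comm.mp hPP
  have hrow : ∀ i, ∑ k, (P i k)^2 = 1 := rowsum_sq P hPP
  have hcol : ∀ k, ∑ i, (P i k)^2 = 1 := colsum_sq P hPtP
  have hdiag : diagonal (fun i => γs i ^ 2) = P * diagonal ν * Pᵀ := by
    have h1 : Uᵀ * (U * diagonal (fun i => γs i ^ 2) * Uᵀ) * U
        = Uᵀ * (V * diagonal ν * Vᵀ) * U := by rw [← hM, hLL]
    calc diagonal (fun i => γs i ^ 2)
        = (Uᵀ * U) * diagonal (fun i => γs i ^ 2) * (Uᵀ * U) := by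
          rw [hU, Matrix.one_mul, Matrix.mul_one]
      _ = Uᵀ * (U * diagonal (fun i => γs i ^ 2) * Uᵀ) * U := by noncomm_ring
      _ = Uᵀ * (V * diagonal ν * Vᵀ) * U := h1
      _ = P * diagonal ν * Pᵀ := by
          rw [hPdef, Matrix.transpose_mul, Matrix.transpose_transpose]; noncomm_ring
  have hentry : ∀ i, γs i ^ 2 = ∑ k, (P i k)^2 * ν k := by
    intro i
    have h2 := congrFun (congrFun hdiag i) i
    rw [Matrix.diagonal_apply_eq] at h2
    rw [h2, Matrix.mul_apply]
    simp only [Matrix.mul_diagonal, Matrix.transpose_apply]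
    refine Finset.sum_congr rfl fun k _ => ?_
    ring
  have hkey : ∀ i, ∑ k, (P i k)^2 * Real.sqrt (ν k) ≤ γs i := by
    intro i
    have hnn : 0 ≤ ∑ k, (P i k)^2 * Real.sqrt (ν k) :=
      Finset.sum_nonneg fun k _ => mul_nonneg (sq_nonneg _) (Real.sqrt_nonneg _)
    have hcs := Finset.sum_mul_sq_le_sq_mul_sq Finset.univ (fun k => |P i k|)
        (fun k => |P i k| * Real.sqrt (ν k))
    have e1 : ∀ k : Fin n, |P i k| * (|P i k| * Real.sqrt (ν k)) = (P i k)^2 * Real.sqrt (ν k) := by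
      intro k; rw [← mul_assoc, ← sq_abs]; ring_nf
    have e2 : ∀ k : Fin n, (|P i k| * Real.sqrt (ν k))^2 = (P i k)^2 * ν k := by
      intro k; rw [mul_pow, sq_abs, Real.sq_sqrt (hν k)]
    simp only [e1, e2, sq_abs] at hcs
    rw [hrow i, one_mul, ← hentry i] at hcs
    calc ∑ k, (P i k)^2 * Real.sqrt (ν k)
        = Real.sqrt ((∑ k, (P i k)^2 * Real.sqrt (ν k))^2) := (Real.sqrt_sq hnn).symm
      _ ≤ Real.sqrt ((γs i)^2) := Real.sqrt_le_sqrt hcs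
      _ = γs i := Real.sqrt_sq (hγs i)
  have hnuc : nuclearNorm M ≤ ∑ i, γs i := by
    have hnuc1 : nuclearNorm M = ∑ k, Real.sqrt (ν k) := rfl
    have hnuc2 : nuclearNorm M = ∑ i, ∑ k, (P i k)^2 * Real.sqrt (ν k) := by
      rw [hnuc1, Finset.sum_comm]
      refine Finset.sum_congr rfl fun k _ => ?_
      rw [← Finset.sum_mul, hcol k, one_mul]
    rw [hnuc2]
    exact Finset.sum_le_sum fun i _ => hkey i
  calc ρ / 2 * frobNormSq (U * diagonal σ * Uᵀ - Mᵀ * M) + τ * nuclearNorm M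
      ≤ ρ / 2 * frobNormSq (U * diagonal σ * Uᵀ - Mᵀ * M) + τ * ∑ i, γs i :=
        add_le_add_right (mul_le_mul_of_nonneg_left hnuc hτ) _
    _ = ∑ i, (ρ / 2 * (σ i - γs i ^ 2) ^ 2 + τ * γs i) := by
        rw [hfrob, Finset.mul_sum, Finset.mul_sum, ← Finset.sum_add_distrib]

end aux

/-- If A = U Σ Uᵀ with U orthogonal, Σ = diag(σ), σᵢ ≥ 0, and for each i,
γ*ᵢ ≥ 0 minimizes γ ↦ (ρ/2)·(σᵢ − γ²)² + τ·γ over [0,∞), then L* = diag(γ*) Uᵀ is a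
global minimizer of L ↦ (ρ/2)·‖A − LᵀL‖_F² + τ·‖L‖_*. -/
theorem stmt_3 (n : ℕ) (hn : 0 < n) (ρ τ : ℝ) (hρ : 0 < ρ) (hτ : 0 < τ)
    (A U : Matrix (Fin n) (Fin n) ℝ) (σ γs : Fin n → ℝ)
    (hA : A.PosSemidef) (hU : Uᵀ * U = 1)
    (hdec : A = U * Matrix.diagonal σ * Uᵀ)
    (hσ : ∀ i, 0 ≤ σ i)
    (hγs : ∀ i, 0 ≤ γs i)
    (hmin : ∀ i, ∀ γ : ℝ, 0 ≤ γ →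
      ρ / 2 * (σ i - γs i ^ 2) ^ 2 + τ * γs i ≤ ρ / 2 * (σ i - γ ^ 2) ^ 2 + τ * γ) :
    ∀ L : Matrix (Fin n) (Fin n) ℝ,
      ρ / 2 * frobNormSq (A - (Matrix.diagonal γs * Uᵀ)ᵀ * (Matrix.diagonal γs * Uᵀ)) +
          τ * nuclearNorm (Matrix.diagonal γs * Uᵀ) ≤
        ρ / 2 * frobNormSq (A - Lᵀ * L) + τ * nuclearNorm L := by
  intro L
  rw [hdec]
  exact le_trans (upper_bound ρ τ hτ.le U σ γs hU hγs) (lower_bound ρ τ U σ γs hU hmin L)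
end

section
/- Let n be a positive integer, let D be an n×n doubly stochastic real matrix, and let a₁ ≥ a₂ ≥ … ≥ aₙ ≥ 0 and b₁ ≥ b₂ ≥ … ≥ bₙ ≥ 0 be nonincreasing sequences of nonnegative real numbers. Then Σᵢ Σⱼ d_{ij} · aᵢ · bⱼ ≤ Σᵢ aᵢ · bᵢ. -/
/-- If D is an n×n doubly stochastic matrix and a, b are nonincreasing
nonnegative sequences, then ∑ᵢ∑ⱼ d_{ij}·aᵢ·bⱼ ≤ ∑ᵢ aᵢ·bᵢ. -/
theorem stmt_11 (n : ℕ) (hn : 0 < n) (D : Matrix (Fin n) (Fin n) ℝ)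
    (a b : Fin n → ℝ)
    (hD0 : ∀ i j, 0 ≤ D i j)
    (hDrow : ∀ i, ∑ j, D i j = 1)
    (hDcol : ∀ j, ∑ i, D i j = 1)
    (ha : Antitone a) (hb : Antitone b)
    (ha0 : ∀ i, 0 ≤ a i) (hb0 : ∀ i, 0 ≤ b i) :
    ∑ i, ∑ j, D i j * a i * b j ≤ ∑ i, a i * b i := by
  classical
  open Finset in
  -- Extend a, b to ℕ by 0
  set A : ℕ → ℝ := fun k => if h : k < n then a ⟨k, h⟩ else 0 with hA
  set B : ℕ → ℝ := fun k => if h : k < n then b ⟨k, h⟩ else 0 with hB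
  have hAanti : Antitone A := by
    intro x y hxy
    by_cases hy : y < n
    · have hx : x < n := lt_of_le_of_lt hxy hy
      simp only [hA, dif_pos hx, dif_pos hy]
      exact ha hxy
    · by_cases hx : x < n
      · simp only [hA, dif_pos hx, dif_neg hy]
        exact ha0 _
      · simp [hA, hx, hy]
  have hBanti : Antitone B := by
    intro x y hxy
    by_cases hy : y < n
    · have hx : x < n := lt_of_le_of_lt hxy hy
      simp only [hB, dif_pos hx, dif_pos hy]
      exact hb hxy
    · by_cases hx : x < n
      · simp only [hB, dif_pos hx, dif_neg hy]
        exact hb0 _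
      · simp [hB, hx, hy]
  set c : ℕ → ℝ := fun k => A k - A (k + 1) with hc
  set e : ℕ → ℝ := fun k => B k - B (k + 1) with he
  have hc0 : ∀ k, 0 ≤ c k := fun k => sub_nonneg.2 (hAanti (Nat.le_succ k))
  have he0 : ∀ k, 0 ≤ e k := fun k => sub_nonneg.2 (hBanti (Nat.le_succ k))
  have hAn : A n = 0 := by simp [hA]
  have hBn : B n = 0 := by simp [hB]
  -- layer-cake decomposition
  have ha_sum : ∀ i : Fin n, a i = ∑ k ∈ range n, if (i : ℕ) ≤ k then c k else 0 := by
    intro i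
    rw [← Finset.sum_filter]
    have hfil : (range n).filter (fun k => (i : ℕ) ≤ k) = Finset.Ico (i : ℕ) n := by
      ext x; simp [Finset.mem_Ico]; omega
    rw [hfil, Finset.sum_Ico_eq_sub _ (le_of_lt i.2), Finset.sum_range_sub' A,
      Finset.sum_range_sub' A, hAn]
    simp [hA, i.2]
  have hb_sum : ∀ i : Fin n, b i = ∑ k ∈ range n, if (i : ℕ) ≤ k then e k else 0 := by
    intro i
    rw [← Finset.sum_filter]
    have hfil : (range n).filter (fun k => (i : ℕ) ≤ k) = Finset.Ico (i : ℕ) n := by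
      ext x; simp [Finset.mem_Ico]; omega
    rw [hfil, Finset.sum_Ico_eq_sub _ (le_of_lt i.2), Finset.sum_range_sub' B,
      Finset.sum_range_sub' B, hBn]
    simp [hB, i.2]
  -- counting sums
  have hcount : ∀ (p : ℕ → Prop) [DecidablePred p] (m : ℕ), m + 1 ≤ n →
      (∀ x, p x ↔ x ≤ m) → (∑ i : Fin n, if p (i : ℕ) then (1 : ℝ) else 0) = (m : ℝ) + 1 := by
    intro p _ m hm hp
    rw [Fin.sum_univ_eq_sum_range (fun x => if p x then (1 : ℝ) else 0) n, ← Finset.sum_filter]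
    have : (range n).filter p = range (m + 1) := by
      ext x
      simp only [Finset.mem_filter, Finset.mem_range, hp]
      omega
    rw [this]
    simp
  -- bounding the truncated mass
  have hTrow : ∀ k l : ℕ, k < n →
      (∑ i : Fin n, ∑ j : Fin n, if (i : ℕ) ≤ k ∧ (j : ℕ) ≤ l then D i j else 0)
        ≤ (k : ℝ) + 1 := by
    intro k l hk
    calc (∑ i : Fin n, ∑ j : Fin n, if (i : ℕ) ≤ k ∧ (j : ℕ) ≤ l then D i j else 0)
        ≤ ∑ i : Fin n, if (i : ℕ) ≤ k then (1 : ℝ) else 0 := by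
          apply Finset.sum_le_sum
          intro i _
          by_cases hik : (i : ℕ) ≤ k
          · rw [if_pos hik]
            calc (∑ j : Fin n, if (i : ℕ) ≤ k ∧ (j : ℕ) ≤ l then D i j else 0)
                ≤ ∑ j : Fin n, D i j := by
                  apply Finset.sum_le_sum
                  intro j _
                  split_ifs with h
                  · exact le_refl _
                  · exact hD0 i j
              _ = 1 := hDrow i
          · rw [if_neg hik]
            apply le_of_eq
            apply Finset.sum_eq_zero
            intro j _
            rw [if_neg]
            tauto
      _ = (k : ℝ) + 1 := hcount _ k hk (fun _ => Iff.rfl)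
  have hTcol : ∀ k l : ℕ, l < n →
      (∑ i : Fin n, ∑ j : Fin n, if (i : ℕ) ≤ k ∧ (j : ℕ) ≤ l then D i j else 0)
        ≤ (l : ℝ) + 1 := by
    intro k l hl
    rw [Finset.sum_comm]
    calc (∑ j : Fin n, ∑ i : Fin n, if (i : ℕ) ≤ k ∧ (j : ℕ) ≤ l then D i j else 0)
        ≤ ∑ j : Fin n, if (j : ℕ) ≤ l then (1 : ℝ) else 0 := by
          apply Finset.sum_le_sum
          intro j _
          by_cases hjl : (j : ℕ) ≤ l
          · rw [if_pos hjl]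
            calc (∑ i : Fin n, if (i : ℕ) ≤ k ∧ (j : ℕ) ≤ l then D i j else 0)
                ≤ ∑ i : Fin n, D i j := by
                  apply Finset.sum_le_sum
                  intro i _
                  split_ifs with h
                  · exact le_refl _
                  · exact hD0 i j
              _ = 1 := hDcol j
          · rw [if_neg hjl]
            apply le_of_eq
            apply Finset.sum_eq_zero
            intro i _
            rw [if_neg]
            tauto
      _ = (l : ℝ) + 1 := hcount _ l hl (fun _ => Iff.rfl)
  have hM : ∀ k l : ℕ, k < n → l < n →
      (∑ i : Fin n, if (i : ℕ) ≤ k ∧ (i : ℕ) ≤ l then (1 : ℝ) else 0)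
        = ((min k l : ℕ) : ℝ) + 1 := by
    intro k l hk hl
    exact hcount (fun x => x ≤ k ∧ x ≤ l) (min k l)
      (by omega) (fun x => by omega)
  -- rewrite LHS
  have hLHS : ∑ i, ∑ j, D i j * a i * b j
      = ∑ k ∈ range n, ∑ l ∈ range n, c k * e l *
          (∑ i : Fin n, ∑ j : Fin n, if (i : ℕ) ≤ k ∧ (j : ℕ) ≤ l then D i j else 0) := by
    have step1 : ∀ i j : Fin n, D i j * a i * b j
        = ∑ k ∈ range n, ∑ l ∈ range n,
            (if (i : ℕ) ≤ k ∧ (j : ℕ) ≤ l then c k * e l * D i j else 0) := by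
      intro i j
      rw [ha_sum i, hb_sum j, mul_assoc, Finset.sum_mul_sum, Finset.mul_sum]
      refine Finset.sum_congr rfl fun k _ => ?_
      rw [Finset.mul_sum]
      refine Finset.sum_congr rfl fun l _ => ?_
      by_cases h1 : (i : ℕ) ≤ k <;> by_cases h2 : (j : ℕ) ≤ l <;>
        simp only [h1, h2, if_true, if_false, true_and, false_and, and_true, and_false,
          mul_zero, zero_mul, if_neg, not_false_iff] <;> first | ring | simp [h1, h2]
    calc ∑ i, ∑ j, D i j * a i * b j
        = ∑ i : Fin n, ∑ j : Fin n, ∑ k ∈ range n, ∑ l ∈ range n,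
            (if (i : ℕ) ≤ k ∧ (j : ℕ) ≤ l then c k * e l * D i j else 0) :=
          Finset.sum_congr rfl fun i _ => Finset.sum_congr rfl fun j _ => step1 i j
      _ = ∑ i : Fin n, ∑ k ∈ range n, ∑ j : Fin n, ∑ l ∈ range n,
            (if (i : ℕ) ≤ k ∧ (j : ℕ) ≤ l then c k * e l * D i j else 0) := by
          refine Finset.sum_congr rfl fun i _ => ?_
          exact Finset.sum_comm
      _ = ∑ k ∈ range n, ∑ i : Fin n, ∑ j : Fin n, ∑ l ∈ range n,
            (if (i : ℕ) ≤ k ∧ (j : ℕ) ≤ l then c k * e l * D i j else 0) :=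
          Finset.sum_comm
      _ = ∑ k ∈ range n, ∑ i : Fin n, ∑ l ∈ range n, ∑ j : Fin n,
            (if (i : ℕ) ≤ k ∧ (j : ℕ) ≤ l then c k * e l * D i j else 0) := by
          refine Finset.sum_congr rfl fun k _ => Finset.sum_congr rfl fun i _ => ?_
          exact Finset.sum_comm
      _ = ∑ k ∈ range n, ∑ l ∈ range n, ∑ i : Fin n, ∑ j : Fin n,
            (if (i : ℕ) ≤ k ∧ (j : ℕ) ≤ l then c k * e l * D i j else 0) := by
          refine Finset.sum_congr rfl fun k _ => ?_
          exact Finset.sum_comm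
      _ = ∑ k ∈ range n, ∑ l ∈ range n, c k * e l *
            (∑ i : Fin n, ∑ j : Fin n, if (i : ℕ) ≤ k ∧ (j : ℕ) ≤ l then D i j else 0) := by
          refine Finset.sum_congr rfl fun k _ => Finset.sum_congr rfl fun l _ => ?_
          rw [Finset.mul_sum]
          refine Finset.sum_congr rfl fun i _ => ?_
          rw [Finset.mul_sum]
          refine Finset.sum_congr rfl fun j _ => ?_
          split_ifs <;> simp
  -- rewrite RHS
  have hRHS : ∑ i, a i * b i
      = ∑ k ∈ range n, ∑ l ∈ range n, c k * e l *
          (∑ i : Fin n, if (i : ℕ) ≤ k ∧ (i : ℕ) ≤ l then (1 : ℝ) else 0) := by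
    have step1 : ∀ i : Fin n, a i * b i
        = ∑ k ∈ range n, ∑ l ∈ range n,
            (if (i : ℕ) ≤ k ∧ (i : ℕ) ≤ l then c k * e l else 0) := by
      intro i
      rw [ha_sum i, hb_sum i, Finset.sum_mul_sum]
      refine Finset.sum_congr rfl fun k _ => Finset.sum_congr rfl fun l _ => ?_
      by_cases h1 : (i : ℕ) ≤ k <;> by_cases h2 : (i : ℕ) ≤ l <;>
        simp [h1, h2]
    calc ∑ i, a i * b i
        = ∑ i : Fin n, ∑ k ∈ range n, ∑ l ∈ range n,
            (if (i : ℕ) ≤ k ∧ (i : ℕ) ≤ l then c k * e l else 0) :=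
          Finset.sum_congr rfl fun i _ => step1 i
      _ = ∑ k ∈ range n, ∑ i : Fin n, ∑ l ∈ range n,
            (if (i : ℕ) ≤ k ∧ (i : ℕ) ≤ l then c k * e l else 0) :=
          Finset.sum_comm
      _ = ∑ k ∈ range n, ∑ l ∈ range n, ∑ i : Fin n,
            (if (i : ℕ) ≤ k ∧ (i : ℕ) ≤ l then c k * e l else 0) := by
          refine Finset.sum_congr rfl fun k _ => ?_
          exact Finset.sum_comm
      _ = ∑ k ∈ range n, ∑ l ∈ range n, c k * e l *
            (∑ i : Fin n, if (i : ℕ) ≤ k ∧ (i : ℕ) ≤ l then (1 : ℝ) else 0) := by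
          refine Finset.sum_congr rfl fun k _ => Finset.sum_congr rfl fun l _ => ?_
          rw [Finset.mul_sum]
          refine Finset.sum_congr rfl fun i _ => ?_
          split_ifs <;> simp
  rw [hLHS, hRHS]
  apply Finset.sum_le_sum
  intro k hk
  apply Finset.sum_le_sum
  intro l hl
  have hk' : k < n := Finset.mem_range.1 hk
  have hl' : l < n := Finset.mem_range.1 hl
  have hTle : (∑ i : Fin n, ∑ j : Fin n, if (i : ℕ) ≤ k ∧ (j : ℕ) ≤ l then D i j else 0)
      ≤ ∑ i : Fin n, if (i : ℕ) ≤ k ∧ (i : ℕ) ≤ l then (1 : ℝ) else 0 := by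
    rw [hM k l hk' hl']
    rcases le_total k l with h | h
    · rw [min_eq_left h]
      exact hTrow k l hk'
    · rw [min_eq_right h]
      exact hTcol k l hl'
  exact mul_le_mul_of_nonneg_left hTle (mul_nonneg (hc0 k) (he0 l))
end

section
/- Let n be a positive integer, let W be an n×n real orthogonal matrix with entries w_{ij}, and let σ₁ ≥ … ≥ σₙ ≥ 0 and γ₁ ≥ … ≥ γₙ ≥ 0 be nonincreasing sequences of nonnegative reals, with Σ and Γ the corresponding diagonal matrices. Then trace(Σ · W Γ² Wᵀ) = Σᵢ Σⱼ w_{ij}² · γⱼ² · σᵢ ≤ Σᵢ σᵢ · γᵢ², and consequently ‖Σ − W Γ² Wᵀ‖_F² ≥ Σᵢ (σᵢ − γᵢ²)². -/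
open Matrix BigOperators Finset

-- telescoping
example (a : ℕ → ℝ) (n i : ℕ) (h : i ≤ n) :
    ∑ k ∈ Ico i n, (a k - a (k+1)) = a i - a n := by
  rw [Finset.sum_Ico_eq_sub _ h, Finset.sum_range_sub', Finset.sum_range_sub']
  ring

lemma abel_interchange (n : ℕ) (g α : ℕ → ℝ) :
    ∑ i ∈ range n, (∑ k ∈ Ico i n, α k) * g i
      = ∑ k ∈ range n, α k * ∑ i ∈ range (k+1), g i := by
  simp only [Finset.sum_mul, Finset.mul_sum]
  rw [Finset.range_eq_Ico, sum_Ico_Ico_comm]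
  simp only [Finset.range_eq_Ico]
  

lemma key_ds (n : ℕ) (D : ℕ → ℕ → ℝ) (a b : ℕ → ℝ)
    (hD0 : ∀ i j, 0 ≤ D i j)
    (hrow : ∀ i, i < n → ∑ j ∈ range n, D i j = 1)
    (hcol : ∀ j, j < n → ∑ i ∈ range n, D i j = 1)
    (ha : Antitone a) (hb : Antitone b) (han : a n = 0) (hbn : b n = 0) :
    ∑ i ∈ range n, ∑ j ∈ range n, D i j * a i * b j ≤ ∑ i ∈ range n, a i * b i := by
  set α : ℕ → ℝ := fun k => a k - a (k+1) with hα
  set β : ℕ → ℝ := fun k => b k - b (k+1) with hβ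
  have hα0 : ∀ k, 0 ≤ α k := fun k => sub_nonneg.2 (ha (Nat.le_succ k))
  have hβ0 : ∀ k, 0 ≤ β k := fun k => sub_nonneg.2 (hb (Nat.le_succ k))
  have hA : ∀ i ∈ range n, a i = ∑ k ∈ Ico i n, α k := by
    intro i hi
    rw [Finset.sum_Ico_eq_sub _ (le_of_lt (mem_range.1 hi)), Finset.sum_range_sub',
      Finset.sum_range_sub', han]
    ring
  have hB : ∀ j ∈ range n, b j = ∑ k ∈ Ico j n, β k := by
    intro j hj
    rw [Finset.sum_Ico_eq_sub _ (le_of_lt (mem_range.1 hj)), Finset.sum_range_sub',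
      Finset.sum_range_sub', hbn]
    ring
  -- rewrite LHS
  have hLHS : ∑ i ∈ range n, ∑ j ∈ range n, D i j * a i * b j
      = ∑ k ∈ range n, α k * ∑ l ∈ range n, β l *
          ∑ i ∈ range (k+1), ∑ j ∈ range (l+1), D i j := by
    calc ∑ i ∈ range n, ∑ j ∈ range n, D i j * a i * b j
        = ∑ i ∈ range n, (∑ k ∈ Ico i n, α k) * (∑ j ∈ range n, D i j * b j) := by
          refine Finset.sum_congr rfl fun i hi => ?_
          rw [← hA i hi, Finset.mul_sum]
          exact Finset.sum_congr rfl fun j hj => by ring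
      _ = ∑ k ∈ range n, α k * ∑ i ∈ range (k+1), ∑ j ∈ range n, D i j * b j :=
          abel_interchange n _ α
      _ = ∑ k ∈ range n, α k * ∑ i ∈ range (k+1), ∑ j ∈ range n,
            (∑ l ∈ Ico j n, β l) * (D i j) := by
          refine Finset.sum_congr rfl fun k hk => ?_
          congr 1
          refine Finset.sum_congr rfl fun i hi => Finset.sum_congr rfl fun j hj => ?_
          rw [← hB j hj]; ring
      _ = ∑ k ∈ range n, α k * ∑ l ∈ range n, β l *
            ∑ i ∈ range (k+1), ∑ j ∈ range (l+1), D i j := by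
          refine Finset.sum_congr rfl fun k hk => ?_
          congr 1
          rw [Finset.sum_comm]
          simp only [← Finset.mul_sum]
          rw [abel_interchange n (fun j => ∑ i ∈ range (k+1), D i j) β]
          refine Finset.sum_congr rfl fun l hl => by rw [Finset.sum_comm]
  have hcard : ∀ (k l : ℕ) (c : ℝ), ∑ i ∈ range (k+1), (if i ≤ l then c else 0)
      = c * (min (k+1) (l+1) : ℕ) := by
    intro k l c
    rw [← Finset.sum_filter]
    have : (range (k+1)).filter (· ≤ l) = range (min (k+1) (l+1)) := by
      ext x; simp [Nat.lt_min]
    rw [this, Finset.sum_const, Finset.card_range, nsmul_eq_mul, mul_comm]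
  have hRHS : ∑ i ∈ range n, a i * b i
      = ∑ k ∈ range n, α k * ∑ l ∈ range n, β l * ((min (k+1) (l+1) : ℕ) : ℝ) := by
    calc ∑ i ∈ range n, a i * b i
        = ∑ i ∈ range n, (∑ k ∈ Ico i n, α k) * b i := by
          refine Finset.sum_congr rfl fun i hi => by rw [← hA i hi]
      _ = ∑ k ∈ range n, α k * ∑ i ∈ range (k+1), b i := abel_interchange n b α
      _ = ∑ k ∈ range n, α k * ∑ l ∈ range n, β l * ((min (k+1) (l+1) : ℕ) : ℝ) := by
          refine Finset.sum_congr rfl fun k hk => ?_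
          congr 1
          calc ∑ i ∈ range (k+1), b i
              = ∑ i ∈ range (k+1), ∑ l ∈ range n, (if i ≤ l then β l else 0) := by
                refine Finset.sum_congr rfl fun i hi => ?_
                have hin : i ∈ range n := mem_range.2
                  (lt_of_lt_of_le (mem_range.1 hi) (mem_range.1 hk))
                rw [hB i hin, ← Finset.sum_filter]
                congr 1
                ext x; simp [Finset.mem_Ico]; tauto
            _ = ∑ l ∈ range n, ∑ i ∈ range (k+1), (if i ≤ l then β l else 0) :=
                Finset.sum_comm
            _ = ∑ l ∈ range n, β l * ((min (k+1) (l+1) : ℕ) : ℝ) :=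
                Finset.sum_congr rfl fun l hl => hcard k l (β l)
  rw [hLHS, hRHS]
  refine Finset.sum_le_sum fun k hk => ?_
  refine mul_le_mul_of_nonneg_left (Finset.sum_le_sum fun l hl => ?_) (hα0 k)
  refine mul_le_mul_of_nonneg_left ?_ (hβ0 l)
  -- T(k,l) ≤ min(k+1, l+1)
  have hsub1 : range (k+1) ⊆ range n := by
    intro x hx; exact mem_range.2 (lt_of_lt_of_le (mem_range.1 hx) (mem_range.1 hk))
  have hsub2 : range (l+1) ⊆ range n := by
    intro x hx; exact mem_range.2 (lt_of_lt_of_le (mem_range.1 hx) (mem_range.1 hl))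
  have h1 : ∑ i ∈ range (k+1), ∑ j ∈ range (l+1), D i j ≤ ((k+1 : ℕ) : ℝ) := by
    calc ∑ i ∈ range (k+1), ∑ j ∈ range (l+1), D i j
        ≤ ∑ i ∈ range (k+1), ∑ j ∈ range n, D i j := by
          refine Finset.sum_le_sum fun i hi => ?_
          exact Finset.sum_le_sum_of_subset_of_nonneg hsub2 (fun j _ _ => hD0 i j)
      _ = ∑ i ∈ range (k+1), 1 := by
          refine Finset.sum_congr rfl fun i hi => hrow i (mem_range.1 (hsub1 hi))
      _ = ((k+1 : ℕ) : ℝ) := by simp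
  have h2 : ∑ i ∈ range (k+1), ∑ j ∈ range (l+1), D i j ≤ ((l+1 : ℕ) : ℝ) := by
    calc ∑ i ∈ range (k+1), ∑ j ∈ range (l+1), D i j
        = ∑ j ∈ range (l+1), ∑ i ∈ range (k+1), D i j := Finset.sum_comm
      _ ≤ ∑ j ∈ range (l+1), ∑ i ∈ range n, D i j := by
          refine Finset.sum_le_sum fun j hj => ?_
          exact Finset.sum_le_sum_of_subset_of_nonneg hsub1 (fun i _ _ => hD0 i j)
      _ = ∑ j ∈ range (l+1), 1 := by
          refine Finset.sum_congr rfl fun j hj => hcol j (mem_range.1 (hsub2 hj))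
      _ = ((l+1 : ℕ) : ℝ) := by simp
  rcases le_total (k+1) (l+1) with h | h
  · rw [min_eq_left h]; exact h1
  · rw [min_eq_right h]; exact h2

open Matrix

/-- For W orthogonal and nonincreasing nonnegative σ, γ with Σ = diag(σ),
Γ = diag(γ): trace(Σ·WΓ²Wᵀ) = ∑ᵢ∑ⱼ wᵢⱼ²·γⱼ²·σᵢ ≤ ∑ᵢ σᵢ·γᵢ², and consequently
‖Σ − WΓ²Wᵀ‖_F² ≥ ∑ᵢ (σᵢ − γᵢ²)². -/
theorem stmt_12 (n : ℕ) (hn : 0 < n) (W : Matrix (Fin n) (Fin n) ℝ)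
    (σ γ : Fin n → ℝ) (hW : Wᵀ * W = 1)
    (hσ : Antitone σ) (hγ : Antitone γ)
    (hσ0 : ∀ i, 0 ≤ σ i) (hγ0 : ∀ i, 0 ≤ γ i) :
    Matrix.trace (Matrix.diagonal σ *
        (W * Matrix.diagonal (fun i => γ i ^ 2) * Wᵀ)) =
      ∑ i, ∑ j, (W i j) ^ 2 * γ j ^ 2 * σ i ∧
    ∑ i, ∑ j, (W i j) ^ 2 * γ j ^ 2 * σ i ≤ ∑ i, σ i * γ i ^ 2 ∧
    frobNormSq (Matrix.diagonal σ - W * Matrix.diagonal (fun i => γ i ^ 2) * Wᵀ) ≥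
      ∑ i, (σ i - γ i ^ 2) ^ 2 := by
  have hW' : W * Wᵀ = 1 := mul_eq_one_comm.1 hW
  set A := W * Matrix.diagonal (fun i => γ i ^ 2) * Wᵀ with hAdef
  have hAii : ∀ i, A i i = ∑ j, W i j ^ 2 * γ j ^ 2 := by
    intro i
    rw [hAdef, Matrix.mul_apply]
    simp only [Matrix.mul_diagonal, Matrix.transpose_apply]
    exact Finset.sum_congr rfl fun j _ => by ring
  -- Part 1
  have h1 : Matrix.trace (Matrix.diagonal σ * A) = ∑ i, ∑ j, (W i j) ^ 2 * γ j ^ 2 * σ i := by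
    rw [Matrix.trace]
    refine Finset.sum_congr rfl fun i _ => ?_
    rw [Matrix.diag_apply, Matrix.mul_apply, Finset.sum_eq_single i]
    · rw [Matrix.diagonal_apply_eq, hAii, Finset.mul_sum]
      exact Finset.sum_congr rfl fun j _ => by ring
    · intro b _ hb; rw [Matrix.diagonal_apply_ne _ (Ne.symm hb), zero_mul]
    · simp
  -- Part 2
  set a : ℕ → ℝ := fun k => if h : k < n then σ ⟨k, h⟩ else 0 with ha
  set b : ℕ → ℝ := fun k => if h : k < n then γ ⟨k, h⟩ ^ 2 else 0 with hb
  set D : ℕ → ℕ → ℝ := fun i j =>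
    if h : i < n ∧ j < n then W ⟨i, h.1⟩ ⟨j, h.2⟩ ^ 2 else 0 with hD
  have haA : Antitone a := by
    intro s t hst
    by_cases h : t < n
    · have hs : s < n := lt_of_le_of_lt hst h
      simp only [ha, dif_pos h, dif_pos hs]
      exact hσ (by exact hst)
    · by_cases hs : s < n
      · simp only [ha, dif_neg h, dif_pos hs]; exact hσ0 _
      · simp [ha, dif_neg h, dif_neg hs]
  have hbA : Antitone b := by
    intro s t hst
    by_cases h : t < n
    · have hs : s < n := lt_of_le_of_lt hst h
      simp only [hb, dif_pos h, dif_pos hs]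
      have := hγ (show (⟨s,hs⟩ : Fin n) ≤ ⟨t,h⟩ from hst)
      exact pow_le_pow_left₀ (hγ0 _) this 2
    · by_cases hs : s < n
      · simp only [hb, dif_neg h, dif_pos hs]; positivity
      · simp [hb, dif_neg h, dif_neg hs]
  have hD0 : ∀ i j, 0 ≤ D i j := by
    intro i j; simp only [hD]; split <;> positivity
  have hrow : ∀ i, i < n → ∑ j ∈ Finset.range n, D i j = 1 := by
    intro i hi
    have := congrFun (congrFun hW' ⟨i, hi⟩) ⟨i, hi⟩
    simp only [Matrix.mul_apply, Matrix.one_apply_eq, Matrix.transpose_apply] at this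
    rw [← this, ← Fin.sum_univ_eq_sum_range (fun j => D i j)]
    refine Finset.sum_congr rfl fun j _ => ?_
    simp [hD, hi, j.isLt]
    ring
  have hcol : ∀ j, j < n → ∑ i ∈ Finset.range n, D i j = 1 := by
    intro j hj
    have := congrFun (congrFun hW ⟨j, hj⟩) ⟨j, hj⟩
    simp only [Matrix.mul_apply, Matrix.one_apply_eq, Matrix.transpose_apply] at this
    rw [← this, ← Fin.sum_univ_eq_sum_range (fun i => D i j)]
    refine Finset.sum_congr rfl fun i _ => ?_
    simp [hD, hj, i.isLt]
    ring
  have h2 : ∑ i, ∑ j, (W i j) ^ 2 * γ j ^ 2 * σ i ≤ ∑ i, σ i * γ i ^ 2 := by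
    have key := key_ds n D a b hD0 hrow hcol haA hbA (by simp [ha]) (by simp [hb])
    have eL : ∑ i, ∑ j, (W i j) ^ 2 * γ j ^ 2 * σ i
        = ∑ i ∈ Finset.range n, ∑ j ∈ Finset.range n, D i j * a i * b j := by
      rw [← Fin.sum_univ_eq_sum_range]
      refine Finset.sum_congr rfl fun i _ => ?_
      rw [← Fin.sum_univ_eq_sum_range]
      refine Finset.sum_congr rfl fun j _ => ?_
      simp [hD, ha, hb, i.isLt, j.isLt]
      ring
    have eR : ∑ i, σ i * γ i ^ 2 = ∑ i ∈ Finset.range n, a i * b i := by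
      rw [← Fin.sum_univ_eq_sum_range]
      refine Finset.sum_congr rfl fun i _ => ?_
      simp [ha, hb, i.isLt]
    rw [eL, eR]; exact key
  refine ⟨h1, h2, ?_⟩
  -- Part 3
  have hAsym : Aᵀ = A := by
    simp only [hAdef, Matrix.transpose_mul, Matrix.transpose_transpose,
      Matrix.diagonal_transpose, Matrix.mul_assoc]
  have hA2 : ∑ i, ∑ j, A i j ^ 2 = ∑ i, γ i ^ 2 * γ i ^ 2 := by
    set d := Matrix.diagonal (fun i => γ i ^ 2) with hd
    have : A * A = W * Matrix.diagonal (fun i => γ i ^ 2 * γ i ^ 2) * Wᵀ := by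
      rw [hAdef]
      calc (W * d) * Wᵀ * ((W * d) * Wᵀ)
          = W * (d * ((Wᵀ * W) * (d * Wᵀ))) := by simp only [Matrix.mul_assoc]
        _ = W * (d * (d * Wᵀ)) := by rw [hW, Matrix.one_mul]
        _ = W * ((d * d) * Wᵀ) := by rw [Matrix.mul_assoc]
        _ = (W * (d * d)) * Wᵀ := by rw [← Matrix.mul_assoc]
        _ = W * Matrix.diagonal (fun i => γ i ^ 2 * γ i ^ 2) * Wᵀ := by
            rw [hd, Matrix.diagonal_mul_diagonal]
    have htr : Matrix.trace (A * A) = ∑ i, γ i ^ 2 * γ i ^ 2 := by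
      rw [this, Matrix.trace_mul_comm, ← Matrix.mul_assoc, hW, Matrix.one_mul,
        Matrix.trace_diagonal]
    rw [← htr, Matrix.trace]
    refine Finset.sum_congr rfl fun i _ => ?_
    rw [Matrix.diag_apply, Matrix.mul_apply]
    refine Finset.sum_congr rfl fun j _ => ?_
    have hji : A j i = A i j := congrFun (congrFun hAsym i) j
    rw [hji]; ring
  have hexp : frobNormSq (Matrix.diagonal σ - A)
      = ∑ i, σ i ^ 2 - 2 * (∑ i, ∑ j, (W i j) ^ 2 * γ j ^ 2 * σ i)
        + ∑ i, γ i ^ 2 * γ i ^ 2 := by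
    rw [← h1]
    unfold frobNormSq
    have expand : ∀ i j : Fin n, ((Matrix.diagonal σ - A) i j) ^ 2
        = (Matrix.diagonal σ i j)^2 - 2 * (Matrix.diagonal σ i j * A i j) + (A i j)^2 := by
      intro i j; simp [Matrix.sub_apply]; ring
    simp only [expand, Finset.sum_add_distrib, Finset.sum_sub_distrib, ← Finset.mul_sum]
    rw [hA2]
    congr 2
    · refine Finset.sum_congr rfl fun i _ => ?_
      rw [Finset.sum_eq_single i]
      · simp
      · intro b _ hb; simp [Matrix.diagonal_apply_ne _ (Ne.symm hb)]
      · simp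
    · congr 1
      rw [Matrix.trace]
      refine Finset.sum_congr rfl fun i _ => ?_
      rw [Matrix.diag_apply, Matrix.mul_apply]
      refine Finset.sum_congr rfl fun j _ => ?_
      by_cases h : i = j
      · subst h; simp
      · simp [Matrix.diagonal_apply_ne _ h]
  rw [ge_iff_le, hexp]
  have : ∑ i, (σ i - γ i ^ 2) ^ 2
      = ∑ i, σ i ^ 2 - 2 * (∑ i, σ i * γ i ^ 2) + ∑ i, γ i ^ 2 * γ i ^ 2 := by
    rw [Finset.mul_sum, ← Finset.sum_sub_distrib, ← Finset.sum_add_distrib]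
    exact Finset.sum_congr rfl fun i _ => by ring
  rw [this]
  linarith [h2]
end
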